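/- Fix real constants m > 0, k ≠ 0, M > 0, set Ñ₁ = 1, Ñ₂ = M, Ñ₃ = 1, and fix natural numbers i, h, l. On the open set {I₁,I₂,I₃ > 0} ⊂ ℝ⁶ with coordinates (I₁,I₂,I₃,φ¹,φ²,φ³), define the vector field Γ'_{ih} = (1/(3+i)) Σ_{j=1}^3 Ñ_j^h I_j^{h+1} (∂/∂I_j + ∂/∂φ^j) and the functions H'_l = −mk²/((2−l) I₃^{2−l}) for l ≠ 2 and H'_2 = mk² ln(I₃). Then the directional derivative of H'_l along Γ'_{ih} satisfies: ⟨dH'_l, Γ'_{ih}⟩ = mk²/(3+i) if h + l = 2, and ⟨dH'_l, Γ'_{ih}⟩ = −((2 − (h+l))/(3+i)) H'_{l+h} if h + l ≠ 2. -/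

import Mathlib

open scoped BigOperators

/-- Phase space with Delaunay-type coordinates `z.1 = (I₁,I₂,I₃)` and
angles `z.2 = (φ¹,φ²,φ³)`. -/
abbrev PhaseSpace := (Fin 3 → ℝ) × (Fin 3 → ℝ)

/-- Lie bracket of vector fields:
`[X,Y](z) = (DY)(z)·X(z) − (DX)(z)·Y(z)`. -/
noncomputable def lieB (X Y : PhaseSpace → PhaseSpace) (z : PhaseSpace) : PhaseSpace :=
  fderiv ℝ Y z (X z) - fderiv ℝ X z (Y z)

/-- The constants `Ñ₁ = 1, Ñ₂ = M, Ñ₃ = 1`. -/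
noncomputable def Ntil (M : ℝ) : Fin 3 → ℝ := ![1, M, 1]

/-- The vector fields `Γ'_{ih} = (1/(3+i)) Σ_j Ñ_j^h I_j^{h+1} (∂/∂I_j + ∂/∂φ^j)`. -/
noncomputable def Gam' (M : ℝ) (i h : ℕ) (z : PhaseSpace) : PhaseSpace :=
  ((fun j => (1 / (3 + (i : ℝ))) * (Ntil M j) ^ h * (z.1 j) ^ (h + 1)),
   (fun j => (1 / (3 + (i : ℝ))) * (Ntil M j) ^ h * (z.1 j) ^ (h + 1)))

/-- The hierarchy of Hamiltonians: `H'_l = −mk²/((2−l) I₃^{2−l})` for `l ≠ 2`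
and `H'_2 = mk² ln I₃`. -/
noncomputable def Hfam (m k : ℝ) (l : ℕ) (z : PhaseSpace) : ℝ :=
  if l = 2 then m * k ^ 2 * Real.log (z.1 2)
  else -(m * k ^ 2) / ((2 - (l : ℝ)) * (z.1 2) ^ ((2 : ℝ) - (l : ℝ)))

/-- One-variable version of `Hfam`. -/
noncomputable def HfamAux (m k : ℝ) (l : ℕ) (x : ℝ) : ℝ :=
  if l = 2 then m * k ^ 2 * Real.log x
  else -(m * k ^ 2) / ((2 - (l : ℝ)) * x ^ ((2 : ℝ) - (l : ℝ)))

lemma HfamAux_deriv (m k : ℝ) (l : ℕ) (x : ℝ) (hx : 0 < x) :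
    HasDerivAt (HfamAux m k l) (m * k ^ 2 * x ^ ((l : ℝ) - 3)) x := by
  by_cases hl : l = 2
  · subst hl
    have h := (Real.hasDerivAt_log hx.ne').const_mul (m * k ^ 2)
    have heq : (fun x => m * k ^ 2 * Real.log x) = HfamAux m k 2 := by
      funext y; simp [HfamAux]
    rw [heq] at h
    refine h.congr_deriv ?_
    rw [show ((2:ℕ):ℝ) - 3 = -1 by norm_num, Real.rpow_neg_one]
  · have hl' : (l : ℝ) ≠ 2 := by
      exact_mod_cast fun hh => hl (by exact_mod_cast hh)
    have hc : (2 : ℝ) - (l : ℝ) ≠ 0 := sub_ne_zero.2 (Ne.symm hl')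
    have hD : HasDerivAt (fun y : ℝ => (-(m * k ^ 2) / (2 - (l : ℝ))) * y ^ ((l : ℝ) - 2))
        ((-(m * k ^ 2) / (2 - (l : ℝ))) * (((l : ℝ) - 2) * x ^ ((l : ℝ) - 2 - 1))) x :=
      (Real.hasDerivAt_rpow_const (Or.inl hx.ne')).const_mul _
    have heq : HfamAux m k l =ᶠ[nhds x]
        fun y => (-(m * k ^ 2) / (2 - (l : ℝ))) * y ^ ((l : ℝ) - 2) := by
      filter_upwards [eventually_gt_nhds hx] with y hy
      have hyp : (0:ℝ) < y ^ ((2:ℝ) - (l:ℝ)) := Real.rpow_pos_of_pos hy _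
      rw [HfamAux, if_neg hl, show (l:ℝ) - 2 = -((2:ℝ) - (l:ℝ)) by ring,
        Real.rpow_neg hy.le]
      field_simp
    have := hD.congr_of_eventuallyEq heq
    refine this.congr_deriv ?_
    rw [show (l : ℝ) - 2 - 1 = (l:ℝ) - 3 by ring]
    field_simp
    ring

lemma Hfam_fderiv (m k : ℝ) (l : ℕ) (z : PhaseSpace) (hz : ∀ j : Fin 3, 0 < z.1 j) :
    fderiv ℝ (Hfam m k l) z =
      (m * k ^ 2 * (z.1 2) ^ ((l : ℝ) - 3)) •
        ((ContinuousLinearMap.proj (R := ℝ) (φ := fun _ : Fin 3 => ℝ) (2 : Fin 3)).comp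
          (ContinuousLinearMap.fst ℝ (Fin 3 → ℝ) (Fin 3 → ℝ))) := by
  have hπ : HasFDerivAt (fun z : PhaseSpace => z.1 2)
      ((ContinuousLinearMap.proj (R := ℝ) (φ := fun _ : Fin 3 => ℝ) (2 : Fin 3)).comp
        (ContinuousLinearMap.fst ℝ (Fin 3 → ℝ) (Fin 3 → ℝ))) z :=
    ((ContinuousLinearMap.proj (R := ℝ) (φ := fun _ : Fin 3 => ℝ) (2 : Fin 3)).comp
        (ContinuousLinearMap.fst ℝ (Fin 3 → ℝ) (Fin 3 → ℝ))).hasFDerivAt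
  have h := (HfamAux_deriv m k l (z.1 2) (hz 2)).comp_hasFDerivAt z hπ
  have heq : (HfamAux m k l) ∘ (fun z : PhaseSpace => z.1 2) = Hfam m k l := rfl
  rw [heq] at h
  exact h.fderiv

/-- The directional derivative of `H'_l` along `Γ'_{ih}` on `{I₁,I₂,I₃ > 0}`:
`⟨dH'_l, Γ'_{ih}⟩ = mk²/(3+i)` if `h + l = 2`, and
`⟨dH'_l, Γ'_{ih}⟩ = −((2−(h+l))/(3+i)) H'_{l+h}` if `h + l ≠ 2`. -/
theorem stmt19 (m k M : ℝ) (hm : 0 < m) (hk : k ≠ 0) (hM : 0 < M) (i h l : ℕ) :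
    ∀ z : PhaseSpace, (∀ j : Fin 3, 0 < z.1 j) →
      (h + l = 2 →
        fderiv ℝ (Hfam m k l) z (Gam' M i h z) = m * k ^ 2 / (3 + (i : ℝ))) ∧
      (h + l ≠ 2 →
        fderiv ℝ (Hfam m k l) z (Gam' M i h z)
          = -((2 - ((h : ℝ) + (l : ℝ))) / (3 + (i : ℝ))) * Hfam m k (l + h) z) := by
  intro z hz
  have hx : (0:ℝ) < z.1 2 := hz 2
  set x : ℝ := z.1 2 with hxdef
  have h3i : (3 : ℝ) + (i : ℝ) ≠ 0 := by positivity
  have hval : fderiv ℝ (Hfam m k l) z (Gam' M i h z)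
      = m * k ^ 2 / (3 + (i : ℝ)) * x ^ ((h:ℝ) + (l:ℝ) - 2) := by
    rw [Hfam_fderiv m k l z hz]
    have hxe : x ^ ((h:ℝ) + (l:ℝ) - 2) = x ^ ((l:ℝ) - 3) * x ^ (((h:ℕ):ℝ) + 1) := by
      rw [← Real.rpow_add hx]; congr 1; ring
    simp only [ContinuousLinearMap.coe_smul', Pi.smul_apply, ContinuousLinearMap.coe_comp',
      Function.comp_apply, ContinuousLinearMap.coe_fst', ContinuousLinearMap.proj_apply,
      smul_eq_mul, Gam', Ntil]
    rw [hxe]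
    norm_num [Matrix.cons_val_fin_one]
    rw [← Real.rpow_natCast x (h+1)]
    push_cast
    ring
  constructor
  · intro hhl
    rw [hval]
    have : (h:ℝ) + (l:ℝ) - 2 = 0 := by
      have : ((h + l : ℕ) : ℝ) = 2 := by rw [hhl]; norm_num
      push_cast at this; linarith
    rw [this, Real.rpow_zero, mul_one]
  · intro hhl
    rw [hval]
    have hlh2 : l + h ≠ 2 := by omega
    have hs : (2:ℝ) - ((l + h : ℕ) : ℝ) ≠ 0 := by
      intro hc
      apply hlh2
      have : ((l + h : ℕ) : ℝ) = 2 := by linarith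
      exact_mod_cast this
    have hxp : (0:ℝ) < x ^ ((2:ℝ) - ((l + h : ℕ):ℝ)) := Real.rpow_pos_of_pos hx _
    rw [Hfam, if_neg hlh2]
    have hxe : x ^ ((h:ℝ) + (l:ℝ) - 2) = (x ^ ((2:ℝ) - ((l + h : ℕ):ℝ)))⁻¹ := by
      rw [← Real.rpow_neg hx.le]; congr 1; push_cast; ring
    rw [hxe]
    push_cast at hs hxp ⊢
    rw [← hxdef]
    field_simp
    ring
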